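/- Suppose ω ≤ cf(λ) < μ ≤ λ. Let X be the topological disjoint union of the ordinal spaces cf(λ) and λ⁺ (each with the order topology). Then X is [μ,λ]-compact. -/

import Mathlib

open Cardinal

/-- `X` is `[μ,λ]`-compact: every open cover by at most `lam` sets
has a subcover by fewer than `μ` sets. -/
def CptIn (μ lam : Cardinal) (X : Type) [TopologicalSpace X] : Prop :=
  ∀ 𝒰 : Set (Set X), (∀ U ∈ 𝒰, IsOpen U) → #𝒰 ≤ lam → ⋃₀ 𝒰 = Set.univ →
    ∃ 𝒱 ⊆ 𝒰, #𝒱 < μ ∧ ⋃₀ 𝒱 = Set.univ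

/-- `p` is a `D`-limit point of the sequence `x`. -/
def IsDLimit {I X : Type} [TopologicalSpace X] (D : Ultrafilter I) (x : I → X) (p : X) : Prop :=
  ∀ U : Set X, IsOpen U → p ∈ U → {i | x i ∈ U} ∈ D

/-- `X` is `D`-compact. -/
def DCompact {I : Type} (D : Ultrafilter I) (X : Type) [TopologicalSpace X] : Prop :=
  ∀ x : I → X, ∃ p : X, IsDLimit D x p

/-- `D` is `μ`-complete. -/
def MuComplete {I : Type} (μ : Cardinal) (D : Ultrafilter I) : Prop :=
  ∀ S : Set (Set I), #S < μ → (∀ A ∈ S, A ∈ D) → ⋂₀ S ∈ D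

/-- `D` is `(μ,lam)`-regular: there is a family of `lam`-many members of `D`
every intersection of `μ`-many of which is empty. -/
def RegUF {I : Type} (μ lam : Cardinal) (D : Ultrafilter I) : Prop :=
  ∃ (A : Type) (Z : A → Set I), #A = lam ∧ (∀ a, Z a ∈ D) ∧
    ∀ S : Set A, #S = μ → ⋂ a ∈ S, Z a = ∅

/-- The ordinal space of a cardinal, with the order topology. -/
noncomputable def ordSpace (c : Cardinal) : Type := c.ord.ToType

noncomputable instance (c : Cardinal) : LinearOrder (ordSpace c) :=
  inferInstanceAs (LinearOrder c.ord.ToType)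
noncomputable instance (c : Cardinal) : TopologicalSpace (ordSpace c) := Preorder.topology _
instance (c : Cardinal) : OrderTopology (ordSpace c) := ⟨rfl⟩

instance (c : Cardinal) : WellFoundedLT (ordSpace c) :=
  inferInstanceAs (WellFoundedLT c.ord.ToType)

lemma mk_ordSpace (c : Cardinal) : #(ordSpace c) = c := by
  show #c.ord.ToType = c
  rw [Cardinal.mk_toType, Cardinal.card_ord]

lemma ordSpace_bounded {lam : Cardinal} (hlam : ℵ₀ ≤ lam)
    (s : Set (ordSpace (Order.succ lam))) (hs : #s ≤ lam) :
    ∃ b, ∀ x ∈ s, x < b := by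
  haveI : IsWellOrder (ordSpace (Order.succ lam)) (· < ·) := isWellOrder_lt
  have hcof : Order.cof (ordSpace (Order.succ lam)) = Order.succ lam := by
    show Order.cof (Order.succ lam).ord.ToType = _
    rw [Ordinal.cof_toType, (Cardinal.isRegular_succ hlam).cof_ord]
  by_contra hb
  push_neg at hb
  have hcf : IsCofinal s := fun a => by
    obtain ⟨x, hx, h⟩ := hb a
    exact ⟨x, hx, h⟩
  have := Order.cof_le hcf
  rw [hcof] at this
  exact absurd (hs.trans_lt (Order.lt_succ lam)) (not_lt.2 this)

lemma ordSpace_lub {lam : Cardinal} (s : Set (ordSpace (Order.succ lam)))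
    (hne : (upperBounds s).Nonempty) : ∃ p, IsLUB s p := by
  refine ⟨(wellFounded_lt (α := ordSpace (Order.succ lam))).min _ hne,
    WellFounded.min_mem _ _ hne, fun y hy => ?_⟩
  exact not_lt.1 fun hlt => WellFounded.not_lt_min _ _ hy hlt

/-- Main lemma: every cover of the ordinal space `λ⁺` by at most `λ` open sets
has a finite subcover. -/
lemma ordSpace_succ_finite_subcover {lam : Cardinal} (hlam : ℵ₀ ≤ lam) {ι : Type}
    (U : ι → Set (ordSpace (Order.succ lam))) (hopen : ∀ i, IsOpen (U i))
    (hcard : #ι ≤ lam) (hcover : (⋃ i, U i) = Set.univ) :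
    ∃ F : Finset ι, (⋃ i ∈ F, U i) = Set.univ := by
  classical
  haveI hne : Nonempty (ordSpace (Order.succ lam)) := by
    show Nonempty (Order.succ lam).ord.ToType
    rw [Ordinal.toType_nonempty_iff_ne_zero]
    simp only [ne_eq, Cardinal.ord_eq_zero]
    exact (Order.bot_lt_succ lam).ne'
  by_cases htail : ∃ i b, ∀ x, b < x → x ∈ U i
  · -- some set contains a tail; cover the compact initial segment below it
    obtain ⟨i, b, hib⟩ := htail
    letI : OrderBot (ordSpace (Order.succ lam)) :=
      { bot := (wellFounded_lt (α := ordSpace (Order.succ lam))).min Set.univ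
          ⟨Classical.arbitrary _, Set.mem_univ _⟩
        bot_le := fun a => not_lt.1 fun hlt =>
          WellFounded.not_lt_min _ _ (Set.mem_univ a) hlt }
    letI : ConditionallyCompleteLinearOrderBot (ordSpace (Order.succ lam)) :=
      WellFoundedLT.conditionallyCompleteLinearOrderBot _
    have hIic : IsCompact (Set.Iic b) := by
      rw [← Set.Icc_bot]
      exact isCompact_Icc
    obtain ⟨F₀, hF₀⟩ := hIic.elim_finite_subcover U hopen
      (by rw [hcover]; exact Set.subset_univ _)
    refine ⟨insert i F₀, Set.eq_univ_of_forall fun x => ?_⟩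
    rcases le_or_gt x b with hx | hx
    · obtain ⟨j, hj, hxj⟩ := Set.mem_iUnion₂.1 (hF₀ hx)
      exact Set.mem_biUnion (Finset.mem_insert_of_mem hj) hxj
    · exact Set.mem_biUnion (Finset.mem_insert_self i F₀) (hib x hx)
  · -- otherwise every complement is unbounded; a diagonal sup lies in no set
    exfalso
    push_neg at htail
    haveI : Nonempty ι := by
      by_contra h
      rw [not_nonempty_iff] at h
      have h0 : (⋃ i, U i) = (∅ : Set (ordSpace (Order.succ lam))) :=
        Set.iUnion_of_empty U
      rw [hcover] at h0
      exact Set.univ_nonempty.ne_empty h0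
    choose c hc1 hc2 using htail
    have hg : ∀ x : ordSpace (Order.succ lam), ∃ g, ∀ i, c i x < g := by
      intro x
      obtain ⟨b, hb⟩ := ordSpace_bounded hlam (Set.range fun i => c i x)
        (Cardinal.mk_range_le.trans hcard)
      exact ⟨b, fun i => hb _ (Set.mem_range_self i)⟩
    choose g hgi using hg
    have hxg : ∀ x, x < g x := fun x =>
      (hc1 (Classical.arbitrary ι) x).trans (hgi x (Classical.arbitrary ι))
    set seq : ℕ → ordSpace (Order.succ lam) :=
      fun n => g^[n] (Classical.arbitrary _) with hseq
    have hseqsucc : ∀ n, seq (n + 1) = g (seq n) := fun n =>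
      Function.iterate_succ_apply' g n _
    have hmono : StrictMono seq := strictMono_nat_of_lt_succ fun n => by
      rw [hseqsucc]; exact hxg _
    obtain ⟨B, hB⟩ := ordSpace_bounded hlam (Set.range seq)
      (Cardinal.mk_range_le.trans (by rw [Cardinal.mk_nat]; exact hlam))
    obtain ⟨p, hp⟩ := ordSpace_lub (Set.range seq)
      ⟨B, fun y hy => (hB y hy).le⟩
    have hub : ∀ n, seq n ≤ p := fun n => hp.1 (Set.mem_range_self n)
    have hlt : ∀ l, l < p → ∃ n, l < seq n := by
      intro l hl
      by_contra h
      push_neg at h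
      exact absurd (hp.2 fun y ⟨n, hn⟩ => hn ▸ h n) (not_le.2 hl)
    have hp0 : seq 0 < p := (hmono Nat.zero_lt_one).trans_le (hub 1)
    obtain ⟨i, hpi⟩ : ∃ i, p ∈ U i :=
      Set.mem_iUnion.1 (hcover ▸ Set.mem_univ p)
    obtain ⟨l, hl, hIoc⟩ := exists_Ioc_subset_of_mem_nhds
      ((hopen i).mem_nhds hpi) ⟨seq 0, hp0⟩
    obtain ⟨n, hn⟩ := hlt l hl
    have h1 : l < c i (seq n) := hn.trans (hc1 i (seq n))
    have hcp : c i (seq n) ≤ p := by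
      refine le_trans ?_ (hub (n + 1))
      rw [hseqsucc]
      exact (hgi (seq n) i).le
    exact hc2 i (seq n) (hIoc ⟨h1, hcp⟩)

theorem stmt9 (μ lam : Cardinal) (hcf : ℵ₀ ≤ lam.ord.cof)
    (h1 : lam.ord.cof < μ) (h2 : μ ≤ lam) :
    CptIn μ lam (ordSpace lam.ord.cof ⊕ ordSpace (Order.succ lam)) := by
  intro 𝒰 hopen hcard hcover
  classical
  have hlam : ℵ₀ ≤ lam := hcf.trans (Ordinal.cof_ord_le lam)
  have hμ : ℵ₀ ≤ μ := hcf.trans h1.le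
  have hmem : ∀ p : ordSpace lam.ord.cof ⊕ ordSpace (Order.succ lam),
      ∃ U ∈ 𝒰, p ∈ U := by
    intro p
    have : p ∈ ⋃₀ 𝒰 := hcover ▸ Set.mem_univ p
    exact this
  -- left part: pointwise choice
  choose V hV1 hV2 using fun x : ordSpace lam.ord.cof => hmem (Sum.inl x)
  -- right part: finite subcover
  obtain ⟨F, hF⟩ := ordSpace_succ_finite_subcover hlam
    (fun u : ↥𝒰 => Sum.inr ⁻¹' u.1)
    (fun u => (hopen _ u.2).preimage continuous_inr)
    hcard
    (by
      apply Set.eq_univ_of_forall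
      intro y
      obtain ⟨U, hU, hyU⟩ := hmem (Sum.inr y)
      exact Set.mem_iUnion.2 ⟨⟨U, hU⟩, hyU⟩)
  refine ⟨Set.range V ∪ (↑(F.image Subtype.val) : Set (Set _)), ?_, ?_, ?_⟩
  · rintro W (⟨x, rfl⟩ | hW)
    · exact hV1 x
    · obtain ⟨u, _, rfl⟩ := Finset.mem_image.1 hW
      exact u.2
  · refine lt_of_le_of_lt (Cardinal.mk_union_le _ _) ?_
    apply Cardinal.add_lt_of_lt hμ
    · exact (Cardinal.mk_range_le.trans_eq (mk_ordSpace _)).trans_lt h1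
    · exact lt_of_lt_of_le (Cardinal.lt_aleph0_of_finite _) hμ
  · apply Set.eq_univ_of_forall
    rintro (x | y)
    · exact ⟨V x, Set.mem_union_left _ (Set.mem_range_self x), hV2 x⟩
    · have : y ∈ ⋃ u ∈ F, Sum.inr ⁻¹' u.1 := hF ▸ Set.mem_univ y
      obtain ⟨u, hu, hyu⟩ := Set.mem_iUnion₂.1 this
      exact ⟨u.1, Set.mem_union_right _ (Finset.mem_coe.2 (Finset.mem_image.2 ⟨u, hu, rfl⟩)), hyu⟩
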